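/- Let e = e₁ + e₃ ∈ A₂. Then the corner algebra eA₂e (the ring eA₂e with unit e and operations induced from A₂) is 4-dimensional over k and is isomorphic as a k-algebra to the path algebra of the Kronecker quiver, that is, to the quotient of the free associative k-algebra on generators f₁, f₂, x, y by the relations f₁² = f₁, f₂² = f₂, f₁f₂ = f₂f₁ = 0, f₁ + f₂ = 1, x = f₂xf₁, y = f₂yf₁. -/

import Mathlib

/-! The gentle algebra `A₂` of Kalck's paper, defined by generators and relations. -/

/-- Generators of the algebra `A₂`: three idempotents `e₁, e₂, e₃` and
arrows `β, γ : 3 → 1`, `α₂ : 1 → 2`, `α₁ : 2 → 3`. -/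
inductive A2Gen : Type
  | e : Fin 3 → A2Gen
  | β : A2Gen
  | γ : A2Gen
  | α₁ : A2Gen
  | α₂ : A2Gen
  deriving DecidableEq

variable (k : Type*) [Field k]

open FreeAlgebra

/-- Defining relations of the algebra `A₂`. -/
inductive A2Rel : FreeAlgebra k A2Gen → FreeAlgebra k A2Gen → Prop
  | orth (i j : Fin 3) :
      A2Rel (ι k (A2Gen.e i) * ι k (A2Gen.e j)) (if i = j then ι k (A2Gen.e i) else 0)
  | sum : A2Rel (ι k (A2Gen.e 0) + ι k (A2Gen.e 1) + ι k (A2Gen.e 2)) 1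
  | beta : A2Rel (ι k (A2Gen.e 0) * ι k A2Gen.β * ι k (A2Gen.e 2)) (ι k A2Gen.β)
  | gamma : A2Rel (ι k (A2Gen.e 0) * ι k A2Gen.γ * ι k (A2Gen.e 2)) (ι k A2Gen.γ)
  | alpha₂ : A2Rel (ι k (A2Gen.e 1) * ι k A2Gen.α₂ * ι k (A2Gen.e 0)) (ι k A2Gen.α₂)
  | alpha₁ : A2Rel (ι k (A2Gen.e 2) * ι k A2Gen.α₁ * ι k (A2Gen.e 1)) (ι k A2Gen.α₁)
  | rel₁ : A2Rel (ι k A2Gen.α₂ * ι k A2Gen.β) 0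
  | rel₂ : A2Rel (ι k A2Gen.γ * ι k A2Gen.α₁) 0
  | rel₃ : A2Rel (ι k A2Gen.α₁ * ι k A2Gen.α₂) 0

/-- The gentle algebra `A₂ = kQ₂/I₂`. -/
abbrev A2 : Type _ := RingQuot (A2Rel k)

namespace A2

/-- The image of a generator in `A₂`. -/
def gen (g : A2Gen) : A2 k := RingQuot.mkAlgHom k (A2Rel k) (ι k g)

/-- The idempotent `eᵢ` of `A₂` (indexed by `i : Fin 3`, so `e₁ = ee 0` etc). -/
def ee (i : Fin 3) : A2 k := gen k (A2Gen.e i)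

/-- The algebra homomorphism `A₂ → k` corresponding to the one-dimensional simple
module `Sᵢ`: the idempotent `eᵢ` acts as the identity, all other generators act by zero. -/
noncomputable def φ (i : Fin 3) : A2 k →ₐ[k] k :=
  RingQuot.liftAlgHom k
    ⟨FreeAlgebra.lift k (fun g => if g = A2Gen.e i then (1 : k) else 0), by
      rintro x y h
      induction h with
      | orth i' j' =>
          simp only [map_mul, apply_ite, map_zero, FreeAlgebra.lift_ι_apply]
          by_cases hij : i' = j'
          · subst hij; by_cases h : i' = i <;> simp [h]
          · by_cases h1 : i' = i <;> by_cases h2 : j' = i <;> simp_all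
      | sum => fin_cases i <;> simp
      | _ => simp⟩

/-- The simple left `A₂`-module `Sᵢ` (a type synonym for `k`). -/
def S (_i : Fin 3) : Type _ := k

noncomputable instance (i : Fin 3) : AddCommGroup (S k i) :=
  inferInstanceAs (AddCommGroup k)

noncomputable instance (i : Fin 3) : Module k (S k i) := inferInstanceAs (Module k k)

noncomputable instance (i : Fin 3) : Module (A2 k) (S k i) :=
  Module.compHom k (φ k i).toRingHom

end A2

namespace A2

variable {K : Type*} [Field K]

lemma rel_eq {x y : FreeAlgebra K A2Gen} (h : A2Rel K x y) :
    RingQuot.mkAlgHom K (A2Rel K) x = RingQuot.mkAlgHom K (A2Rel K) y :=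
  RingQuot.mkAlgHom_rel K h

lemma ee_mul_ee (i j : Fin 3) : ee K i * ee K j = if i = j then ee K i else 0 := by
  have := rel_eq (A2Rel.orth (k := K) i j)
  simpa [gen, ee, apply_ite, map_mul] using this

lemma idem_ee_add_ee {i j : Fin 3} (hij : i ≠ j) :
    (ee K i + ee K j) * (ee K i + ee K j) = ee K i + ee K j := by
  simp [mul_add, add_mul, ee_mul_ee, hij, hij.symm]

end A2

/-! The corner ring `eAe` of a ring `A` at an idempotent `e`:
the set `{eae : a ∈ A}`, with operations induced from `A` and unit `e`. -/

/-- An idempotent element of a ring, bundled with the proof of idempotency. -/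
structure Idem (A : Type*) [Ring A] where
  /-- the underlying element -/
  e : A
  /-- idempotency -/
  idem : e * e = e

variable {A : Type*} [Ring A]

/-- The corner `eAe` of the ring `A` at the idempotent `e`, as a type:
its elements are the `x : A` with `e * x * e = x`, i.e. exactly the elements
of the subset `eAe ⊆ A`. -/
def Corner (E : Idem A) : Type _ := {x : A // E.e * x * E.e = x}

namespace Corner

variable {E : Idem A}

instance : Add (Corner E) :=
  ⟨fun x y => ⟨x.1 + y.1, by rw [mul_add, add_mul, x.2, y.2]⟩⟩

instance : Zero (Corner E) := ⟨⟨0, by simp⟩⟩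

instance : Neg (Corner E) :=
  ⟨fun x => ⟨-x.1, by rw [mul_neg, neg_mul, x.2]⟩⟩

instance : Sub (Corner E) :=
  ⟨fun x y => ⟨x.1 - y.1, by rw [mul_sub, sub_mul, x.2, y.2]⟩⟩

instance : SMul ℕ (Corner E) :=
  ⟨fun n x => ⟨n • x.1, by rw [mul_smul_comm, smul_mul_assoc, x.2]⟩⟩

instance : SMul ℤ (Corner E) :=
  ⟨fun n x => ⟨n • x.1, by rw [mul_smul_comm, smul_mul_assoc, x.2]⟩⟩

private lemma aux_left {e x : A} (he : e * e = e) (hx : e * x * e = x) : e * x = x := by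
  conv_lhs => rw [← hx]
  rw [← mul_assoc, ← mul_assoc, he, hx]

private lemma aux_right {e x : A} (he : e * e = e) (hx : e * x * e = x) : x * e = x := by
  conv_lhs => rw [← hx]
  rw [mul_assoc, he, hx]

instance : Mul (Corner E) :=
  ⟨fun x y => ⟨x.1 * y.1, by
    rw [← mul_assoc, aux_left E.idem x.2, mul_assoc, aux_right E.idem y.2]⟩⟩

instance : One (Corner E) := ⟨⟨E.e, by rw [E.idem, E.idem]⟩⟩

instance : AddCommGroup (Corner E) :=
  Function.Injective.addCommGroup (fun x : Corner E => x.1) Subtype.val_injective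
    rfl (fun _ _ => rfl) (fun _ => rfl) (fun _ _ => rfl) (fun _ _ => rfl) (fun _ _ => rfl)

lemma e_mul_val (x : Corner E) : E.e * x.1 = x.1 := aux_left E.idem x.2

lemma val_mul_e (x : Corner E) : x.1 * E.e = x.1 := aux_right E.idem x.2

instance : Ring (Corner E) where
  __ := (inferInstance : AddCommGroup (Corner E))
  mul := (· * ·)
  one := 1
  mul_assoc x y z := Subtype.ext (mul_assoc x.1 y.1 z.1)
  one_mul x := Subtype.ext (e_mul_val x)
  mul_one x := Subtype.ext (val_mul_e x)
  left_distrib x y z := Subtype.ext (mul_add x.1 y.1 z.1)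
  right_distrib x y z := Subtype.ext (add_mul x.1 y.1 z.1)
  zero_mul x := Subtype.ext (zero_mul x.1)
  mul_zero x := Subtype.ext (mul_zero x.1)

section Algebra

variable {k : Type*} [CommSemiring k] [Algebra k A]

instance : SMul k (Corner E) :=
  ⟨fun c x => ⟨c • x.1, by rw [mul_smul_comm, smul_mul_assoc, x.2]⟩⟩

instance : Module k (Corner E) :=
  Function.Injective.module k
    ⟨⟨fun x : Corner E => x.1, rfl⟩, fun _ _ => rfl⟩
    Subtype.val_injective (fun _ _ => rfl)

instance : Algebra k (Corner E) :=
  Algebra.ofModule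
    (fun c x y => Subtype.ext (smul_mul_assoc c x.1 y.1))
    (fun c x y => Subtype.ext (mul_smul_comm c x.1 y.1))

end Algebra

end Corner

open FreeAlgebra

/-- Generators of the path algebra of the Kronecker quiver: two idempotents `f₁, f₂`
and two parallel arrows `x, y : 1 → 2`. -/
inductive KronGen : Type
  | f : Fin 2 → KronGen
  | x : KronGen
  | y : KronGen
  deriving DecidableEq

/-- Defining relations of the Kronecker algebra: `f₁, f₂` are orthogonal idempotents
with `f₁ + f₂ = 1`, and `x = f₂xf₁`, `y = f₂yf₁`. -/
inductive KronRel : FreeAlgebra k KronGen → FreeAlgebra k KronGen → Prop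
  | orth (i j : Fin 2) :
      KronRel (ι k (KronGen.f i) * ι k (KronGen.f j)) (if i = j then ι k (KronGen.f i) else 0)
  | sum : KronRel (ι k (KronGen.f 0) + ι k (KronGen.f 1)) 1
  | hx : KronRel (ι k (KronGen.f 1) * ι k KronGen.x * ι k (KronGen.f 0)) (ι k KronGen.x)
  | hy : KronRel (ι k (KronGen.f 1) * ι k KronGen.y * ι k (KronGen.f 0)) (ι k KronGen.y)

/-- The path algebra of the Kronecker quiver. -/
abbrev Kron : Type _ := RingQuot (KronRel k)

/-- The idempotent `e = e₁ + e₃` of `A₂`, bundled with its idempotency. -/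
noncomputable def A2.E13 : Idem (A2 k) :=
  ⟨A2.ee k 0 + A2.ee k 2, A2.idem_ee_add_ee (Fin.ne_of_val_ne (by simp))⟩

/-! ### Auxiliary development for `stmt6` -/

section SpanTopAux

variable {R B' : Type*} [CommSemiring R] [Semiring B'] [Algebra R B']

/-- If a set `s` spans `1` and is stable (as a span) under left multiplication by a
generating set of the algebra, then it spans the whole algebra. -/
lemma span_eq_top_of_adjoin (s gens : Set B') (hadj : Algebra.adjoin R gens = ⊤)
    (h1 : (1 : B') ∈ Submodule.span R s)
    (hmul : ∀ g ∈ gens, ∀ b ∈ s, g * b ∈ Submodule.span R s) :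
    Submodule.span R s = ⊤ := by
  set S := Submodule.span R s with hS
  have key : ∀ g ∈ gens, ∀ x ∈ S, g * x ∈ S := by
    intro g hg x hx
    induction hx using Submodule.span_induction with
    | mem y hy => exact hmul g hg y hy
    | zero => simpa using S.zero_mem
    | add y z hy hz hy' hz' => rw [mul_add]; exact S.add_mem hy' hz'
    | smul c y hy hy' => rw [mul_smul_comm]; exact S.smul_mem c hy'
  let T : Subalgebra R B' :=
    { carrier := {a | ∀ x ∈ S, a * x ∈ S}
      mul_mem' := fun {a b} ha hb x hx => by
        rw [mul_assoc]; exact ha _ (hb x hx)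
      add_mem' := fun {a b} ha hb x hx => by
        rw [add_mul]; exact S.add_mem (ha x hx) (hb x hx)
      algebraMap_mem' := fun r x hx => by
        rw [← Algebra.smul_def]; exact S.smul_mem r hx }
  have hgens : gens ⊆ T := fun g hg => fun x hx => key g hg x hx
  have hT : (⊤ : Subalgebra R B') ≤ T := by
    rw [← hadj]; exact Algebra.adjoin_le hgens
  rw [eq_top_iff]
  intro a _
  have ha : a ∈ T := hT (by trivial)
  simpa using ha 1 h1

/-- The images of the generators of a free algebra generate its `RingQuot`. -/
lemma adjoin_range_mk_ι {X : Type*}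
    (r : FreeAlgebra R X → FreeAlgebra R X → Prop) :
    Algebra.adjoin R (Set.range fun g => RingQuot.mkAlgHom R r (ι R g)) = ⊤ := by
  have h : (Set.range fun g => RingQuot.mkAlgHom R r (ι R g))
      = (RingQuot.mkAlgHom R r) '' (Set.range (ι R)) := by
    rw [← Set.range_comp]; rfl
  rw [h, ← AlgHom.map_adjoin, FreeAlgebra.adjoin_range_ι, Algebra.map_top,
    AlgHom.range_eq_top]
  exact RingQuot.mkAlgHom_surjective R r

end SpanTopAux

namespace A2

variable {K : Type*} [Field K]

/-- Arrow `β` in `A₂`. -/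
noncomputable abbrev aβ (K : Type*) [Field K] : A2 K := gen K A2Gen.β
/-- Arrow `γ` in `A₂`. -/
noncomputable abbrev aγ (K : Type*) [Field K] : A2 K := gen K A2Gen.γ
/-- Arrow `α₁` in `A₂`. -/
noncomputable abbrev aα₁ (K : Type*) [Field K] : A2 K := gen K A2Gen.α₁
/-- Arrow `α₂` in `A₂`. -/
noncomputable abbrev aα₂ (K : Type*) [Field K] : A2 K := gen K A2Gen.α₂

lemma mk_ι_eq_gen (g : A2Gen) :
    RingQuot.mkAlgHom K (A2Rel K) (ι K g) = gen K g := rfl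

lemma gen_e_eq_ee (i : Fin 3) : gen K (A2Gen.e i) = ee K i := rfl

lemma sum_ee : ee K 0 + ee K 1 + ee K 2 = 1 := by
  have := rel_eq (A2Rel.sum (k := K))
  simpa [ee, gen, map_add] using this

lemma beta_sandwich : ee K 0 * aβ K * ee K 2 = aβ K := by
  have := rel_eq (A2Rel.beta (k := K))
  simpa [ee, gen, map_mul] using this

lemma gamma_sandwich : ee K 0 * aγ K * ee K 2 = aγ K := by
  have := rel_eq (A2Rel.gamma (k := K))
  simpa [ee, gen, map_mul] using this

lemma alpha1_sandwich : ee K 2 * aα₁ K * ee K 1 = aα₁ K := by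
  have := rel_eq (A2Rel.alpha₁ (k := K))
  simpa [ee, gen, map_mul] using this

lemma alpha2_sandwich : ee K 1 * aα₂ K * ee K 0 = aα₂ K := by
  have := rel_eq (A2Rel.alpha₂ (k := K))
  simpa [ee, gen, map_mul] using this

lemma aα₂_mul_aβ : aα₂ K * aβ K = 0 := by
  have := rel_eq (A2Rel.rel₁ (k := K))
  simpa [gen, map_mul] using this

lemma aγ_mul_aα₁ : aγ K * aα₁ K = 0 := by
  have := rel_eq (A2Rel.rel₂ (k := K))
  simpa [gen, map_mul] using this

lemma aα₁_mul_aα₂ : aα₁ K * aα₂ K = 0 := by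
  have := rel_eq (A2Rel.rel₃ (k := K))
  simpa [gen, map_mul] using this

lemma ee_mul_aβ (i : Fin 3) : ee K i * aβ K = if i = 0 then aβ K else 0 := by
  nth_rewrite 1 [← beta_sandwich]
  rw [← mul_assoc, ← mul_assoc, ee_mul_ee]
  fin_cases i <;> simp [beta_sandwich]

lemma aβ_mul_ee (i : Fin 3) : aβ K * ee K i = if i = 2 then aβ K else 0 := by
  nth_rewrite 1 [← beta_sandwich]
  rw [mul_assoc, ee_mul_ee]
  fin_cases i <;> simp [beta_sandwich]

lemma ee_mul_aγ (i : Fin 3) : ee K i * aγ K = if i = 0 then aγ K else 0 := by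
  nth_rewrite 1 [← gamma_sandwich]
  rw [← mul_assoc, ← mul_assoc, ee_mul_ee]
  fin_cases i <;> simp [gamma_sandwich]

lemma aγ_mul_ee (i : Fin 3) : aγ K * ee K i = if i = 2 then aγ K else 0 := by
  nth_rewrite 1 [← gamma_sandwich]
  rw [mul_assoc, ee_mul_ee]
  fin_cases i <;> simp [gamma_sandwich]

lemma ee_mul_aα₁ (i : Fin 3) : ee K i * aα₁ K = if i = 2 then aα₁ K else 0 := by
  nth_rewrite 1 [← alpha1_sandwich]
  rw [← mul_assoc, ← mul_assoc, ee_mul_ee]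
  fin_cases i <;> simp [alpha1_sandwich]

lemma aα₁_mul_ee (i : Fin 3) : aα₁ K * ee K i = if i = 1 then aα₁ K else 0 := by
  nth_rewrite 1 [← alpha1_sandwich]
  rw [mul_assoc, ee_mul_ee]
  fin_cases i <;> simp [alpha1_sandwich]

lemma ee_mul_aα₂ (i : Fin 3) : ee K i * aα₂ K = if i = 1 then aα₂ K else 0 := by
  nth_rewrite 1 [← alpha2_sandwich]
  rw [← mul_assoc, ← mul_assoc, ee_mul_ee]
  fin_cases i <;> simp [alpha2_sandwich]

lemma aα₂_mul_ee (i : Fin 3) : aα₂ K * ee K i = if i = 0 then aα₂ K else 0 := by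
  nth_rewrite 1 [← alpha2_sandwich]
  rw [mul_assoc, ee_mul_ee]
  fin_cases i <;> simp [alpha2_sandwich]

lemma aβ_mul_aβ : aβ K * aβ K = 0 := by
  nth_rewrite 2 [← beta_sandwich]
  rw [← mul_assoc, ← mul_assoc, aβ_mul_ee]; simp

lemma aβ_mul_aγ : aβ K * aγ K = 0 := by
  nth_rewrite 1 [← gamma_sandwich]
  rw [← mul_assoc, ← mul_assoc, aβ_mul_ee]; simp

lemma aβ_mul_aα₂ : aβ K * aα₂ K = 0 := by
  nth_rewrite 1 [← alpha2_sandwich]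
  rw [← mul_assoc, ← mul_assoc, aβ_mul_ee]; simp

lemma aγ_mul_aβ : aγ K * aβ K = 0 := by
  nth_rewrite 1 [← beta_sandwich]
  rw [← mul_assoc, ← mul_assoc, aγ_mul_ee]; simp

lemma aγ_mul_aγ : aγ K * aγ K = 0 := by
  nth_rewrite 2 [← gamma_sandwich]
  rw [← mul_assoc, ← mul_assoc, aγ_mul_ee]; simp

lemma aγ_mul_aα₂ : aγ K * aα₂ K = 0 := by
  nth_rewrite 1 [← alpha2_sandwich]
  rw [← mul_assoc, ← mul_assoc, aγ_mul_ee]; simp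

lemma aα₁_mul_aβ : aα₁ K * aβ K = 0 := by
  nth_rewrite 1 [← beta_sandwich]
  rw [← mul_assoc, ← mul_assoc, aα₁_mul_ee]; simp

lemma aα₁_mul_aγ : aα₁ K * aγ K = 0 := by
  nth_rewrite 1 [← gamma_sandwich]
  rw [← mul_assoc, ← mul_assoc, aα₁_mul_ee]; simp

lemma aα₁_mul_aα₁ : aα₁ K * aα₁ K = 0 := by
  nth_rewrite 2 [← alpha1_sandwich]
  rw [← mul_assoc, ← mul_assoc, aα₁_mul_ee]; simp

lemma aα₂_mul_aγ_ne : True := trivial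

lemma aα₂_mul_aα₂ : aα₂ K * aα₂ K = 0 := by
  nth_rewrite 2 [← alpha2_sandwich]
  rw [← mul_assoc, ← mul_assoc, aα₂_mul_ee]; simp

lemma aα₂_mul_aα₁ : aα₂ K * aα₁ K = 0 := by
  nth_rewrite 1 [← alpha1_sandwich]
  rw [← mul_assoc, ← mul_assoc, aα₂_mul_ee]; simp

/- primed (right-associated) versions -/

lemma ee_mul_ee' (i j : Fin 3) (x : A2 K) :
    ee K i * (ee K j * x) = if i = j then ee K i * x else 0 := by
  rw [← mul_assoc, ee_mul_ee]; split <;> simp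

lemma ee_mul_aβ' (i : Fin 3) (x : A2 K) :
    ee K i * (aβ K * x) = if i = 0 then aβ K * x else 0 := by
  rw [← mul_assoc, ee_mul_aβ]; split <;> simp

lemma ee_mul_aγ' (i : Fin 3) (x : A2 K) :
    ee K i * (aγ K * x) = if i = 0 then aγ K * x else 0 := by
  rw [← mul_assoc, ee_mul_aγ]; split <;> simp

lemma ee_mul_aα₁' (i : Fin 3) (x : A2 K) :
    ee K i * (aα₁ K * x) = if i = 2 then aα₁ K * x else 0 := by
  rw [← mul_assoc, ee_mul_aα₁]; split <;> simp

lemma ee_mul_aα₂' (i : Fin 3) (x : A2 K) :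
    ee K i * (aα₂ K * x) = if i = 1 then aα₂ K * x else 0 := by
  rw [← mul_assoc, ee_mul_aα₂]; split <;> simp

lemma aβ_mul_ee' (i : Fin 3) (x : A2 K) :
    aβ K * (ee K i * x) = if i = 2 then aβ K * x else 0 := by
  rw [← mul_assoc, aβ_mul_ee]; split <;> simp

lemma aγ_mul_ee' (i : Fin 3) (x : A2 K) :
    aγ K * (ee K i * x) = if i = 2 then aγ K * x else 0 := by
  rw [← mul_assoc, aγ_mul_ee]; split <;> simp

lemma aα₁_mul_ee' (i : Fin 3) (x : A2 K) :
    aα₁ K * (ee K i * x) = if i = 1 then aα₁ K * x else 0 := by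
  rw [← mul_assoc, aα₁_mul_ee]; split <;> simp

lemma aα₂_mul_ee' (i : Fin 3) (x : A2 K) :
    aα₂ K * (ee K i * x) = if i = 0 then aα₂ K * x else 0 := by
  rw [← mul_assoc, aα₂_mul_ee]; split <;> simp

lemma aβ_mul_aβ' (x : A2 K) : aβ K * (aβ K * x) = 0 := by
  rw [← mul_assoc, aβ_mul_aβ, zero_mul]

lemma aβ_mul_aγ' (x : A2 K) : aβ K * (aγ K * x) = 0 := by
  rw [← mul_assoc, aβ_mul_aγ, zero_mul]

lemma aβ_mul_aα₂' (x : A2 K) : aβ K * (aα₂ K * x) = 0 := by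
  rw [← mul_assoc, aβ_mul_aα₂, zero_mul]

lemma aγ_mul_aβ' (x : A2 K) : aγ K * (aβ K * x) = 0 := by
  rw [← mul_assoc, aγ_mul_aβ, zero_mul]

lemma aγ_mul_aγ' (x : A2 K) : aγ K * (aγ K * x) = 0 := by
  rw [← mul_assoc, aγ_mul_aγ, zero_mul]

lemma aγ_mul_aα₂' (x : A2 K) : aγ K * (aα₂ K * x) = 0 := by
  rw [← mul_assoc, aγ_mul_aα₂, zero_mul]

lemma aγ_mul_aα₁' (x : A2 K) : aγ K * (aα₁ K * x) = 0 := by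
  rw [← mul_assoc, aγ_mul_aα₁, zero_mul]

lemma aα₁_mul_aβ' (x : A2 K) : aα₁ K * (aβ K * x) = 0 := by
  rw [← mul_assoc, aα₁_mul_aβ, zero_mul]

lemma aα₁_mul_aγ' (x : A2 K) : aα₁ K * (aγ K * x) = 0 := by
  rw [← mul_assoc, aα₁_mul_aγ, zero_mul]

lemma aα₁_mul_aα₁' (x : A2 K) : aα₁ K * (aα₁ K * x) = 0 := by
  rw [← mul_assoc, aα₁_mul_aα₁, zero_mul]

lemma aα₁_mul_aα₂' (x : A2 K) : aα₁ K * (aα₂ K * x) = 0 := by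
  rw [← mul_assoc, aα₁_mul_aα₂, zero_mul]

lemma aα₂_mul_aβ' (x : A2 K) : aα₂ K * (aβ K * x) = 0 := by
  rw [← mul_assoc, aα₂_mul_aβ, zero_mul]

lemma aα₂_mul_aα₂' (x : A2 K) : aα₂ K * (aα₂ K * x) = 0 := by
  rw [← mul_assoc, aα₂_mul_aα₂, zero_mul]

lemma aα₂_mul_aα₁' (x : A2 K) : aα₂ K * (aα₁ K * x) = 0 := by
  rw [← mul_assoc, aα₂_mul_aα₁, zero_mul]

end A2
namespace A2

variable {K : Type*} [Field K]

/-- Spanning set of `A₂`: the nine paths. -/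
noncomputable def s9 (K : Type*) [Field K] : Set (A2 K) :=
  {ee K 0, ee K 1, ee K 2, aβ K, aγ K, aα₁ K, aα₂ K, aα₂ K * aγ K, aβ K * aα₁ K}

lemma span_s9 : Submodule.span K (s9 K) = ⊤ := by
  apply span_eq_top_of_adjoin _
    (Set.range fun g => RingQuot.mkAlgHom K (A2Rel K) (ι K g)) (adjoin_range_mk_ι _)
  · rw [← sum_ee]
    refine Submodule.add_mem _ (Submodule.add_mem _ ?_ ?_) ?_ <;>
      exact Submodule.subset_span (by simp [s9])
  · rintro g ⟨gg, rfl⟩ b hb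
    simp only [s9, Set.mem_insert_iff, Set.mem_singleton_iff] at hb
    obtain rfl|rfl|rfl|rfl|rfl|rfl|rfl|rfl|rfl := hb <;> cases gg <;>
      simp only [mk_ι_eq_gen, gen_e_eq_ee, mul_assoc,
        ee_mul_ee, ee_mul_aβ, ee_mul_aγ, ee_mul_aα₁, ee_mul_aα₂,
        ee_mul_ee', ee_mul_aβ', ee_mul_aγ', ee_mul_aα₁', ee_mul_aα₂',
        aβ_mul_ee, aγ_mul_ee, aα₁_mul_ee, aα₂_mul_ee,
        aβ_mul_ee', aγ_mul_ee', aα₁_mul_ee', aα₂_mul_ee',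
        aβ_mul_aβ, aβ_mul_aγ, aβ_mul_aα₂, aγ_mul_aβ, aγ_mul_aγ, aγ_mul_aα₂,
        aα₁_mul_aβ, aα₁_mul_aγ, aα₁_mul_aα₁, aα₂_mul_aα₂, aα₂_mul_aα₁,
        aα₂_mul_aβ, aγ_mul_aα₁, aα₁_mul_aα₂,
        aβ_mul_aβ', aβ_mul_aγ', aβ_mul_aα₂', aγ_mul_aβ', aγ_mul_aγ', aγ_mul_aα₂',
        aγ_mul_aα₁', aα₁_mul_aβ', aα₁_mul_aγ', aα₁_mul_aα₁', aα₁_mul_aα₂',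
        aα₂_mul_aβ', aα₂_mul_aα₂', aα₂_mul_aα₁'] <;>
      first
        | exact Submodule.zero_mem _
        | (split
           · next h => subst h; exact Submodule.subset_span (by simp [s9])
           · exact Submodule.zero_mem _)
        | exact Submodule.subset_span (by simp [s9])

end A2
namespace KronAux

variable {K : Type*} [Field K]

/-- Idempotent `fᵢ` of the Kronecker algebra. -/
noncomputable def kf (K : Type*) [Field K] (i : Fin 2) : Kron K :=
  RingQuot.mkAlgHom K (KronRel K) (ι K (KronGen.f i))

/-- Arrow `x` of the Kronecker algebra. -/
noncomputable def kx (K : Type*) [Field K] : Kron K :=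
  RingQuot.mkAlgHom K (KronRel K) (ι K KronGen.x)

/-- Arrow `y` of the Kronecker algebra. -/
noncomputable def ky (K : Type*) [Field K] : Kron K :=
  RingQuot.mkAlgHom K (KronRel K) (ι K KronGen.y)

lemma krel_eq {x y : FreeAlgebra K KronGen} (h : KronRel K x y) :
    RingQuot.mkAlgHom K (KronRel K) x = RingQuot.mkAlgHom K (KronRel K) y :=
  RingQuot.mkAlgHom_rel K h

lemma kf_mul_kf (i j : Fin 2) : kf K i * kf K j = if i = j then kf K i else 0 := by
  have := krel_eq (KronRel.orth (k := K) i j)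
  simpa [kf, apply_ite, map_mul] using this

lemma kf_sum : kf K 0 + kf K 1 = 1 := by
  have := krel_eq (KronRel.sum (k := K))
  simpa [kf, map_add] using this

lemma kx_sandwich : kf K 1 * kx K * kf K 0 = kx K := by
  have := krel_eq (KronRel.hx (k := K))
  simpa [kf, kx, map_mul] using this

lemma ky_sandwich : kf K 1 * ky K * kf K 0 = ky K := by
  have := krel_eq (KronRel.hy (k := K))
  simpa [kf, ky, map_mul] using this

lemma kf_mul_kx (i : Fin 2) : kf K i * kx K = if i = 1 then kx K else 0 := by
  nth_rewrite 1 [← kx_sandwich]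
  rw [← mul_assoc, ← mul_assoc, kf_mul_kf]
  fin_cases i <;> simp [kx_sandwich]

lemma kx_mul_kf (i : Fin 2) : kx K * kf K i = if i = 0 then kx K else 0 := by
  nth_rewrite 1 [← kx_sandwich]
  rw [mul_assoc, kf_mul_kf]
  fin_cases i <;> simp [kx_sandwich]

lemma kf_mul_ky (i : Fin 2) : kf K i * ky K = if i = 1 then ky K else 0 := by
  nth_rewrite 1 [← ky_sandwich]
  rw [← mul_assoc, ← mul_assoc, kf_mul_kf]
  fin_cases i <;> simp [ky_sandwich]

lemma ky_mul_kf (i : Fin 2) : ky K * kf K i = if i = 0 then ky K else 0 := by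
  nth_rewrite 1 [← ky_sandwich]
  rw [mul_assoc, kf_mul_kf]
  fin_cases i <;> simp [ky_sandwich]

lemma kx_mul_kx : kx K * kx K = 0 := by
  nth_rewrite 2 [← kx_sandwich]
  rw [← mul_assoc, ← mul_assoc, kx_mul_kf]; simp

lemma kx_mul_ky : kx K * ky K = 0 := by
  nth_rewrite 1 [← ky_sandwich]
  rw [← mul_assoc, ← mul_assoc, kx_mul_kf]; simp

lemma ky_mul_kx : ky K * kx K = 0 := by
  nth_rewrite 1 [← kx_sandwich]
  rw [← mul_assoc, ← mul_assoc, ky_mul_kf]; simp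

lemma ky_mul_ky : ky K * ky K = 0 := by
  nth_rewrite 2 [← ky_sandwich]
  rw [← mul_assoc, ← mul_assoc, ky_mul_kf]; simp

lemma kf_mul_kf' (i j : Fin 2) (x : Kron K) :
    kf K i * (kf K j * x) = if i = j then kf K i * x else 0 := by
  rw [← mul_assoc, kf_mul_kf]; split <;> simp

lemma kf_mul_kx' (i : Fin 2) (x : Kron K) :
    kf K i * (kx K * x) = if i = 1 then kx K * x else 0 := by
  rw [← mul_assoc, kf_mul_kx]; split <;> simp

lemma kf_mul_ky' (i : Fin 2) (x : Kron K) :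
    kf K i * (ky K * x) = if i = 1 then ky K * x else 0 := by
  rw [← mul_assoc, kf_mul_ky]; split <;> simp

lemma kx_mul_kf' (i : Fin 2) (x : Kron K) :
    kx K * (kf K i * x) = if i = 0 then kx K * x else 0 := by
  rw [← mul_assoc, kx_mul_kf]; split <;> simp

lemma ky_mul_kf' (i : Fin 2) (x : Kron K) :
    ky K * (kf K i * x) = if i = 0 then ky K * x else 0 := by
  rw [← mul_assoc, ky_mul_kf]; split <;> simp

lemma kx_mul_kx' (x : Kron K) : kx K * (kx K * x) = 0 := by
  rw [← mul_assoc, kx_mul_kx, zero_mul]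

lemma kx_mul_ky' (x : Kron K) : kx K * (ky K * x) = 0 := by
  rw [← mul_assoc, kx_mul_ky, zero_mul]

lemma ky_mul_kx' (x : Kron K) : ky K * (kx K * x) = 0 := by
  rw [← mul_assoc, ky_mul_kx, zero_mul]

lemma ky_mul_ky' (x : Kron K) : ky K * (ky K * x) = 0 := by
  rw [← mul_assoc, ky_mul_ky, zero_mul]

/-- Spanning set of the Kronecker algebra. -/
noncomputable def s4 (K : Type*) [Field K] : Set (Kron K) :=
  {kf K 0, kf K 1, kx K, ky K}

lemma span_s4 : Submodule.span K (s4 K) = ⊤ := by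
  apply span_eq_top_of_adjoin _
    (Set.range fun g => RingQuot.mkAlgHom K (KronRel K) (ι K g)) (adjoin_range_mk_ι _)
  · rw [← kf_sum]
    exact Submodule.add_mem _ (Submodule.subset_span (by simp [s4]))
      (Submodule.subset_span (by simp [s4]))
  · rintro g ⟨gg, rfl⟩ b hb
    simp only [s4, Set.mem_insert_iff, Set.mem_singleton_iff] at hb
    have h0 : ∀ g : KronGen, RingQuot.mkAlgHom K (KronRel K) (ι K g)
        = match g with | KronGen.f i => kf K i | KronGen.x => kx K | KronGen.y => ky K := by
      rintro (i|_|_) <;> rfl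
    obtain rfl|rfl|rfl|rfl := hb <;> cases gg <;>
      simp only [h0, kf_mul_kf, kf_mul_kx, kf_mul_ky, kx_mul_kf, ky_mul_kf,
        kx_mul_kx, kx_mul_ky, ky_mul_kx, ky_mul_ky] <;>
      first
        | exact Submodule.zero_mem _
        | (split
           · next h => subst h; exact Submodule.subset_span (by simp [s4])
           · exact Submodule.zero_mem _)
        | exact Submodule.subset_span (by simp [s4])

end KronAux
namespace KronAux

variable {K : Type*} [Field K]

/-- A representation of the Kronecker algebra on `K²` where `x` acts by `E₁₀`
and `y` acts by `0`. -/
noncomputable def repx (K : Type*) [Field K] : Kron K →ₐ[K] Matrix (Fin 2) (Fin 2) K :=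
  RingQuot.liftAlgHom K
    ⟨FreeAlgebra.lift K (fun g => match g with
      | KronGen.f i => if i = 0 then !![1,0;0,0] else !![0,0;0,1]
      | KronGen.x => !![0,0;1,0]
      | KronGen.y => 0), by
      rintro a b h
      induction h with
      | orth i j =>
          simp only [map_mul, apply_ite, map_zero, FreeAlgebra.lift_ι_apply]
          fin_cases i <;> fin_cases j <;>
            (ext a b; fin_cases a <;> fin_cases b <;>
              simp [Matrix.mul_apply, Fin.sum_univ_two])
      | sum =>
          simp only [map_add, map_one, FreeAlgebra.lift_ι_apply]
          ext a b; fin_cases a <;> fin_cases b <;>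
            simp [Matrix.one_apply]
      | hx =>
          simp only [map_mul, FreeAlgebra.lift_ι_apply]
          ext a b; fin_cases a <;> fin_cases b <;>
            simp [Matrix.mul_apply, Fin.sum_univ_two]
      | hy =>
          simp only [map_mul, map_zero, FreeAlgebra.lift_ι_apply]
          simp⟩

/-- A representation of the Kronecker algebra on `K²` where `y` acts by `E₁₀`
and `x` acts by `0`. -/
noncomputable def repy (K : Type*) [Field K] : Kron K →ₐ[K] Matrix (Fin 2) (Fin 2) K :=
  RingQuot.liftAlgHom K
    ⟨FreeAlgebra.lift K (fun g => match g with
      | KronGen.f i => if i = 0 then !![1,0;0,0] else !![0,0;0,1]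
      | KronGen.y => !![0,0;1,0]
      | KronGen.x => 0), by
      rintro a b h
      induction h with
      | orth i j =>
          simp only [map_mul, apply_ite, map_zero, FreeAlgebra.lift_ι_apply]
          fin_cases i <;> fin_cases j <;>
            (ext a b; fin_cases a <;> fin_cases b <;>
              simp [Matrix.mul_apply, Fin.sum_univ_two])
      | sum =>
          simp only [map_add, map_one, FreeAlgebra.lift_ι_apply]
          ext a b; fin_cases a <;> fin_cases b <;>
            simp [Matrix.one_apply]
      | hy =>
          simp only [map_mul, FreeAlgebra.lift_ι_apply]
          ext a b; fin_cases a <;> fin_cases b <;>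
            simp [Matrix.mul_apply, Fin.sum_univ_two]
      | hx =>
          simp only [map_mul, map_zero, FreeAlgebra.lift_ι_apply]
          simp⟩

lemma repx_kf (i : Fin 2) :
    repx K (kf K i) = if i = 0 then !![1,0;0,0] else !![0,0;0,1] := by
  rw [kf, repx, RingQuot.liftAlgHom_mkAlgHom_apply, FreeAlgebra.lift_ι_apply]

lemma repx_kx : repx K (kx K) = !![0,0;1,0] := by
  rw [kx, repx, RingQuot.liftAlgHom_mkAlgHom_apply, FreeAlgebra.lift_ι_apply]

lemma repx_ky : repx K (ky K) = 0 := by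
  rw [ky, repx, RingQuot.liftAlgHom_mkAlgHom_apply, FreeAlgebra.lift_ι_apply]

lemma repy_kf (i : Fin 2) :
    repy K (kf K i) = if i = 0 then !![1,0;0,0] else !![0,0;0,1] := by
  rw [kf, repy, RingQuot.liftAlgHom_mkAlgHom_apply, FreeAlgebra.lift_ι_apply]

lemma repy_ky : repy K (ky K) = !![0,0;1,0] := by
  rw [ky, repy, RingQuot.liftAlgHom_mkAlgHom_apply, FreeAlgebra.lift_ι_apply]

lemma repy_kx : repy K (kx K) = 0 := by
  rw [kx, repy, RingQuot.liftAlgHom_mkAlgHom_apply, FreeAlgebra.lift_ι_apply]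

lemma kron_linearIndependent :
    LinearIndependent K ![kf K 0, kf K 1, kx K, ky K] := by
  rw [Fintype.linearIndependent_iff]
  intro g hg
  rw [Fin.sum_univ_four] at hg
  simp only [Matrix.cons_val_zero, Matrix.cons_val_one, Matrix.head_cons,
    Matrix.cons_val_two, Matrix.tail_cons, Matrix.cons_val_three] at hg
  have hx := congrArg (repx K) hg
  have hy := congrArg (repy K) hg
  simp only [map_add, map_smul, map_zero, repx_kf, repx_kx, repx_ky,
    repy_kf, repy_ky, repy_kx, smul_zero] at hx hy
  have h0 := congrFun (congrFun hx 0) 0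
  have h1 := congrFun (congrFun hx 1) 1
  have h2 := congrFun (congrFun hx 1) 0
  have h3 := congrFun (congrFun hy 1) 0
  simp at h0 h1 h2 h3
  intro i
  fin_cases i <;> first | exact h0 | exact h1 | exact h2 | exact h3

/-- A basis of the Kronecker algebra. -/
noncomputable def kronBasis : Module.Basis (Fin 4) K (Kron K) :=
  Module.Basis.mk kron_linearIndependent (by
    rw [show Set.range ![kf K 0, kf K 1, kx K, ky K] = s4 K by
      simp only [s4, Matrix.range_cons, Matrix.range_empty, Set.union_empty,
        Set.union_singleton]
      ext z
      simp only [Set.mem_insert_iff, Set.mem_singleton_iff, Set.mem_union]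
      tauto]
    rw [span_s4])

lemma finrank_kron : Module.finrank K (Kron K) = 4 := by
  rw [Module.finrank_eq_card_basis (kronBasis (K := K))]
  simp

end KronAux
namespace Corner

variable {A' : Type*} [Ring A'] {E : Idem A'}

@[simp] lemma val_mul (x y : Corner E) : (x * y).1 = x.1 * y.1 := rfl
@[simp] lemma val_add (x y : Corner E) : (x + y).1 = x.1 + y.1 := rfl
@[simp] lemma val_zero : ((0 : Corner E)).1 = 0 := rfl
@[simp] lemma val_one : ((1 : Corner E)).1 = E.e := rfl

end Corner

namespace A2

variable {K : Type*} [Field K]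

/-- `e₁` as an element of the corner algebra. -/
noncomputable def c1 (K : Type*) [Field K] : Corner (A2.E13 K) :=
  ⟨ee K 0, by
    show (ee K 0 + ee K 2) * ee K 0 * (ee K 0 + ee K 2) = ee K 0
    simp [mul_add, add_mul, ee_mul_ee]⟩

/-- `e₃` as an element of the corner algebra. -/
noncomputable def c3 (K : Type*) [Field K] : Corner (A2.E13 K) :=
  ⟨ee K 2, by
    show (ee K 0 + ee K 2) * ee K 2 * (ee K 0 + ee K 2) = ee K 2
    simp [mul_add, add_mul, ee_mul_ee]⟩

/-- `β` as an element of the corner algebra. -/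
noncomputable def cβ (K : Type*) [Field K] : Corner (A2.E13 K) :=
  ⟨aβ K, by
    show (ee K 0 + ee K 2) * aβ K * (ee K 0 + ee K 2) = aβ K
    simp [mul_add, add_mul, ee_mul_aβ, aβ_mul_ee]⟩

/-- `γ` as an element of the corner algebra. -/
noncomputable def cγ (K : Type*) [Field K] : Corner (A2.E13 K) :=
  ⟨aγ K, by
    show (ee K 0 + ee K 2) * aγ K * (ee K 0 + ee K 2) = aγ K
    simp [mul_add, add_mul, ee_mul_aγ, aγ_mul_ee]⟩

open KronAux

/-- The algebra homomorphism `A₂ → Kron` killing vertex 2 and the `α` arrows. -/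
noncomputable def toKron (K : Type*) [Field K] : A2 K →ₐ[K] Kron K :=
  RingQuot.liftAlgHom K
    ⟨FreeAlgebra.lift K (fun g => match g with
      | A2Gen.e i => if i = 0 then kf K 1 else if i = 2 then kf K 0 else 0
      | A2Gen.β => kx K
      | A2Gen.γ => ky K
      | A2Gen.α₁ => 0
      | A2Gen.α₂ => 0), by
      rintro a b h
      induction h with
      | orth i j =>
          fin_cases i <;> fin_cases j <;>
            simp [map_mul, FreeAlgebra.lift_ι_apply, kf_mul_kf]
      | sum =>
          simp only [map_add, map_one, FreeAlgebra.lift_ι_apply]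
          simpa [add_comm] using kf_sum (K := K)
      | beta =>
          simp only [map_mul, FreeAlgebra.lift_ι_apply]
          simpa using kx_sandwich (K := K)
      | gamma =>
          simp only [map_mul, FreeAlgebra.lift_ι_apply]
          simpa using ky_sandwich (K := K)
      | _ => simp⟩

lemma toKron_ee (i : Fin 3) :
    toKron K (ee K i) = if i = 0 then kf K 1 else if i = 2 then kf K 0 else 0 := by
  rw [ee, gen, toKron, RingQuot.liftAlgHom_mkAlgHom_apply, FreeAlgebra.lift_ι_apply]

lemma toKron_aβ : toKron K (aβ K) = kx K := by
  rw [aβ, gen, toKron, RingQuot.liftAlgHom_mkAlgHom_apply, FreeAlgebra.lift_ι_apply]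

lemma toKron_aγ : toKron K (aγ K) = ky K := by
  rw [aγ, gen, toKron, RingQuot.liftAlgHom_mkAlgHom_apply, FreeAlgebra.lift_ι_apply]

lemma toKron_e13 : toKron K ((A2.E13 K).e) = 1 := by
  show toKron K (ee K 0 + ee K 2) = 1
  rw [map_add, toKron_ee, toKron_ee]
  simpa [add_comm] using kf_sum (K := K)

/-- The restriction of `toKron` to the corner algebra. -/
noncomputable def cornerToKron (K : Type*) [Field K] : Corner (A2.E13 K) →ₐ[K] Kron K where
  toFun z := toKron K z.1
  map_one' := toKron_e13
  map_mul' z w := by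
    show toKron K (z.1 * w.1) = toKron K z.1 * toKron K w.1
    rw [map_mul]
  map_zero' := by show toKron K 0 = 0; rw [map_zero]
  map_add' z w := by
    show toKron K (z.1 + w.1) = toKron K z.1 + toKron K w.1
    rw [map_add]
  commutes' c := by
    show toKron K ((algebraMap K (Corner (A2.E13 K)) c).1) = algebraMap K (Kron K) c
    have h : (algebraMap K (Corner (A2.E13 K)) c).1 = c • ((A2.E13 K).e) := by
      rw [Algebra.algebraMap_eq_smul_one]; rfl
    rw [h, map_smul, toKron_e13, Algebra.algebraMap_eq_smul_one]

/-- The algebra homomorphism from the Kronecker algebra to the corner algebra. -/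
noncomputable def toCorner (K : Type*) [Field K] : Kron K →ₐ[K] Corner (A2.E13 K) :=
  RingQuot.liftAlgHom K
    ⟨FreeAlgebra.lift K (fun g => match g with
      | KronGen.f i => if i = 0 then c3 K else c1 K
      | KronGen.x => cβ K
      | KronGen.y => cγ K), by
      rintro a b h
      induction h with
      | orth i j =>
          fin_cases i <;> fin_cases j <;>
            · simp only [map_mul, map_zero, FreeAlgebra.lift_ι_apply, reduceIte]
              apply Subtype.ext
              refine (Corner.val_mul _ _).trans ?_
              simp [c1, c3, Corner.val_mul, Corner.val_zero, ee_mul_ee]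
      | sum =>
          simp only [map_add, map_one, FreeAlgebra.lift_ι_apply]
          simp only [reduceIte]
          apply Subtype.ext
          show ee K 2 + ee K 0 = (A2.E13 K).e
          show ee K 2 + ee K 0 = ee K 0 + ee K 2
          rw [add_comm]
      | hx =>
          simp only [map_mul, FreeAlgebra.lift_ι_apply]
          simp only [reduceIte]
          apply Subtype.ext
          show ee K 0 * aβ K * ee K 2 = aβ K
          exact beta_sandwich
      | hy =>
          simp only [map_mul, FreeAlgebra.lift_ι_apply]
          simp only [reduceIte]
          apply Subtype.ext
          show ee K 0 * aγ K * ee K 2 = aγ K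
          exact gamma_sandwich⟩

lemma toCorner_kf (i : Fin 2) :
    toCorner K (kf K i) = if i = 0 then c3 K else c1 K := by
  rw [kf, toCorner, RingQuot.liftAlgHom_mkAlgHom_apply, FreeAlgebra.lift_ι_apply]

lemma toCorner_kx : toCorner K (kx K) = cβ K := by
  rw [kx, toCorner, RingQuot.liftAlgHom_mkAlgHom_apply, FreeAlgebra.lift_ι_apply]

lemma toCorner_ky : toCorner K (ky K) = cγ K := by
  rw [ky, toCorner, RingQuot.liftAlgHom_mkAlgHom_apply, FreeAlgebra.lift_ι_apply]

lemma cornerToKron_comp_toCorner :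
    (cornerToKron K).comp (toCorner K) = AlgHom.id K (Kron K) := by
  apply RingQuot.ringQuot_ext'
  apply FreeAlgebra.hom_ext
  funext g
  cases g with
  | f i =>
      fin_cases i <;>
        · show cornerToKron K (toCorner K (kf K _)) = kf K _
          rw [toCorner_kf]
          simp only [reduceIte]
          first
            | (show toKron K (ee K 2) = _; rw [toKron_ee]; simp)
            | (show toKron K (ee K 0) = _; rw [toKron_ee]; simp)
  | x =>
      show cornerToKron K (toCorner K (kx K)) = kx K
      rw [toCorner_kx]
      show toKron K (aβ K) = kx K
      exact toKron_aβ
  | y =>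
      show cornerToKron K (toCorner K (ky K)) = ky K
      rw [toCorner_ky]
      show toKron K (aγ K) = ky K
      exact toKron_aγ

end A2
namespace A2

variable {K : Type*} [Field K]

open KronAux

lemma ee_mul_a2g (i : Fin 3) :
    ee K i * (aα₂ K * aγ K) = if i = 1 then aα₂ K * aγ K else 0 := by
  rw [← mul_assoc, ee_mul_aα₂]; split <;> simp

lemma a2g_mul_ee (i : Fin 3) :
    (aα₂ K * aγ K) * ee K i = if i = 2 then aα₂ K * aγ K else 0 := by
  rw [mul_assoc, aγ_mul_ee]; split <;> simp [mul_assoc]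

lemma ee_mul_ba1 (i : Fin 3) :
    ee K i * (aβ K * aα₁ K) = if i = 0 then aβ K * aα₁ K else 0 := by
  rw [← mul_assoc, ee_mul_aβ]; split <;> simp

lemma ba1_mul_ee (i : Fin 3) :
    (aβ K * aα₁ K) * ee K i = if i = 1 then aβ K * aα₁ K else 0 := by
  rw [mul_assoc, aα₁_mul_ee]; split <;> simp [mul_assoc]

/-- The inclusion of the corner algebra into `A₂` as a linear map. -/
noncomputable def cornerVal (K : Type*) [Field K] :
    Corner (A2.E13 K) →ₗ[K] A2 K where
  toFun := Subtype.val
  map_add' _ _ := rfl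
  map_smul' _ _ := rfl

lemma corner_mem_span (z : Corner (A2.E13 K)) :
    z ∈ Submodule.span K ({c1 K, c3 K, cβ K, cγ K} : Set (Corner (A2.E13 K))) := by
  -- first: the value of `z` lies in the span of `e₁, e₃, β, γ` in `A₂`
  have hv : z.1 ∈ Submodule.span K ({ee K 0, ee K 2, aβ K, aγ K} : Set (A2 K)) := by
    have h1 : z.1 ∈ Submodule.span K (s9 K) := by rw [span_s9]; trivial
    have key : ∀ a ∈ Submodule.span K (s9 K),
        (A2.E13 K).e * a * (A2.E13 K).e ∈
          Submodule.span K ({ee K 0, ee K 2, aβ K, aγ K} : Set (A2 K)) := by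
      intro a ha
      induction ha using Submodule.span_induction with
      | mem b hb =>
          show (ee K 0 + ee K 2) * b * (ee K 0 + ee K 2) ∈ _
          simp only [s9, Set.mem_insert_iff, Set.mem_singleton_iff] at hb
          obtain rfl|rfl|rfl|rfl|rfl|rfl|rfl|rfl|rfl := hb
          · rw [show (ee K 0 + ee K 2) * ee K 0 * (ee K 0 + ee K 2) = ee K 0 by
              simp [mul_add, add_mul, ee_mul_ee]]
            exact Submodule.subset_span (by simp)
          · rw [show (ee K 0 + ee K 2) * ee K 1 * (ee K 0 + ee K 2) = 0 by
              simp [mul_add, add_mul, ee_mul_ee]]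
            exact Submodule.zero_mem _
          · rw [show (ee K 0 + ee K 2) * ee K 2 * (ee K 0 + ee K 2) = ee K 2 by
              simp [mul_add, add_mul, ee_mul_ee]]
            exact Submodule.subset_span (by simp)
          · rw [show (ee K 0 + ee K 2) * aβ K * (ee K 0 + ee K 2) = aβ K by
              simp [mul_add, add_mul, ee_mul_aβ, aβ_mul_ee]]
            exact Submodule.subset_span (by simp)
          · rw [show (ee K 0 + ee K 2) * aγ K * (ee K 0 + ee K 2) = aγ K by
              simp [mul_add, add_mul, ee_mul_aγ, aγ_mul_ee]]
            exact Submodule.subset_span (by simp)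
          · rw [show (ee K 0 + ee K 2) * aα₁ K * (ee K 0 + ee K 2) = 0 by
              simp [mul_add, add_mul, ee_mul_aα₁, aα₁_mul_ee]]
            exact Submodule.zero_mem _
          · rw [show (ee K 0 + ee K 2) * aα₂ K * (ee K 0 + ee K 2) = 0 by
              simp [mul_add, add_mul, ee_mul_aα₂, aα₂_mul_ee]]
            exact Submodule.zero_mem _
          · rw [show (ee K 0 + ee K 2) * (aα₂ K * aγ K) * (ee K 0 + ee K 2) = 0 by
              simp [mul_add, add_mul, ee_mul_a2g, a2g_mul_ee]]
            exact Submodule.zero_mem _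
          · rw [show (ee K 0 + ee K 2) * (aβ K * aα₁ K) * (ee K 0 + ee K 2) = 0 by
              simp [mul_add, add_mul, ee_mul_ba1, ba1_mul_ee]]
            exact Submodule.zero_mem _
      | zero => simp
      | add x y _ _ hx hy =>
          rw [mul_add, add_mul]; exact Submodule.add_mem _ hx hy
      | smul c x _ hx =>
          rw [mul_smul_comm, smul_mul_assoc]; exact Submodule.smul_mem _ _ hx
    have := key z.1 h1
    rwa [z.2] at this
  -- transfer back to the corner algebra along the injective linear map `cornerVal`
  have hmap : Submodule.map (cornerVal K)
      (Submodule.span K ({c1 K, c3 K, cβ K, cγ K} : Set (Corner (A2.E13 K))))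
      = Submodule.span K ({ee K 0, ee K 2, aβ K, aγ K} : Set (A2 K)) := by
    rw [Submodule.map_span]
    congr 1
    simp only [Set.image_insert_eq, Set.image_singleton]
    rfl
  rw [← hmap] at hv
  obtain ⟨w, hw, hwz⟩ := hv
  have : w = z := Subtype.ext hwz
  exact this ▸ hw

lemma toCorner_surjective : Function.Surjective (toCorner K) := by
  intro z
  have hz := corner_mem_span z
  have hle : Submodule.span K ({c1 K, c3 K, cβ K, cγ K} : Set (Corner (A2.E13 K)))
      ≤ Subalgebra.toSubmodule (toCorner K).range := by
    rw [Submodule.span_le]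
    rintro w hw
    simp only [Set.mem_insert_iff, Set.mem_singleton_iff] at hw
    obtain rfl|rfl|rfl|rfl := hw
    · exact ⟨kf K 1, by show toCorner K (kf K 1) = c1 K; simp [toCorner_kf]⟩
    · exact ⟨kf K 0, by show toCorner K (kf K 0) = c3 K; simp [toCorner_kf]⟩
    · exact ⟨kx K, by show toCorner K (kx K) = cβ K; rw [toCorner_kx]⟩
    · exact ⟨ky K, by show toCorner K (ky K) = cγ K; rw [toCorner_ky]⟩
  exact hle hz

lemma toCorner_bijective : Function.Bijective (toCorner K) := by
  refine ⟨?_, toCorner_surjective⟩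
  have hli : Function.LeftInverse (cornerToKron K) (toCorner K) := fun z => by
    have := DFunLike.congr_fun (cornerToKron_comp_toCorner (K := K)) z
    simpa using this
  exact hli.injective

/-- The corner algebra `eA₂e` is isomorphic to the Kronecker algebra. -/
noncomputable def cornerEquivKron : Corner (A2.E13 K) ≃ₐ[K] Kron K :=
  (AlgEquiv.ofBijective (toCorner K) toCorner_bijective).symm

end A2

/-- For `e = e₁ + e₃ ∈ A₂`, the corner algebra `eA₂e` is
4-dimensional over `k` and isomorphic, as a `k`-algebra, to the path algebra of the
Kronecker quiver. -/
theorem stmt6 :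
    Module.finrank k (Corner (A2.E13 k)) = 4 ∧
    Nonempty (Corner (A2.E13 k) ≃ₐ[k] Kron k) := by
  refine ⟨?_, ⟨A2.cornerEquivKron⟩⟩
  rw [(A2.cornerEquivKron (K := k)).toLinearEquiv.finrank_eq]
  exact KronAux.finrank_kron
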